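/- With the same hypotheses, if f : [0,1] → 𝔽 is continuous with f(0) = f(1) = 0, then lim_{t→∞} ‖f(u_t) x‖ = 0 for every x ∈ J. -/

import Mathlib

open Filter Topology Polynomial

/-- If `(u t)` is a quasicentral approximate unit for a closed two-sided
ideal `J` in a C*-algebra `B`, and `f : [0,1] → ℝ` is continuous with `f 0 = f 1 = 0`,
then `lim_{t→∞} ‖f(u t) * x‖ = 0` for every `x ∈ J` (where `f(u t)` is defined via
continuous functional calculus). -/
theorem quasicentral_cfc_vanish_tendsto
    {B : Type*} [CStarAlgebra B] [PartialOrder B] [StarOrderedRing B]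
    (J : TwoSidedIdeal B) (hJclosed : IsClosed (J : Set B))
    (u : ℝ → B)
    (hu_cont : Continuous u)
    (hu_mem : ∀ t, u t ∈ J)
    (hu_nonneg : ∀ t, 0 ≤ u t)
    (hu_le_one : ∀ t, u t ≤ 1)
    (hu_approx : ∀ x ∈ J, Tendsto (fun t => ‖u t * x - x‖) atTop (𝓝 0))
    (hu_quasicentral : ∀ b : B, Tendsto (fun t => ‖u t * b - b * u t‖) atTop (𝓝 0))
    (f : ℝ → ℝ) (hf : ContinuousOn f (Set.Icc 0 1)) (hf0 : f 0 = 0) (hf1 : f 1 = 0) :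
    ∀ x ∈ J, Tendsto (fun t => ‖cfc f (u t) * x‖) atTop (𝓝 0) := by
  intro x hx
  have hsa : ∀ t, IsSelfAdjoint (u t) := fun t => (hu_nonneg t).isSelfAdjoint
  have hspec : ∀ t, spectrum ℝ (u t) ⊆ Set.Icc 0 1 := by
    intro t s hs
    refine ⟨spectrum_nonneg_of_nonneg (hu_nonneg t) hs, ?_⟩
    exact (CFC.le_one_iff (R := ℝ) (u t) (hsa t)).mp (hu_le_one t) s hs
  rw [Metric.tendsto_atTop]
  intro ε hε
  -- choose a polynomial approximation
  set δ : ℝ := ε / (4 * (‖x‖ + 1)) with hδdef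
  have hδ : 0 < δ := by positivity
  obtain ⟨p, hp⟩ := exists_polynomial_near_of_continuousOn 0 1 f hf δ hδ
  set q : ℝ[X] := p - C (p.eval 0) * (1 - X) - C (p.eval 1) * X with hqdef
  have hq0 : q.IsRoot 0 := by simp [hqdef, Polynomial.IsRoot]
  have hq1 : q.IsRoot 1 := by simp [hqdef, Polynomial.IsRoot]
  have hqf : ∀ s ∈ Set.Icc (0:ℝ) 1, |q.eval s - f s| ≤ 2 * δ := by
    intro s hs
    have heval : q.eval s = p.eval s - p.eval 0 * (1 - s) - p.eval 1 * s := by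
      simp [hqdef]
    have h0 : |p.eval 0| < δ := by
      simpa [hf0] using hp 0 ⟨le_refl _, zero_le_one⟩
    have h1 : |p.eval 1| < δ := by
      simpa [hf1] using hp 1 ⟨zero_le_one, le_refl _⟩
    have hs' := hp s hs
    have A := abs_lt.mp hs'
    have B0 := abs_lt.mp h0
    have B1 := abs_lt.mp h1
    rw [heval, abs_le]
    constructor <;> nlinarith [hs.1, hs.2, hδ.le]
  -- factor q through s(1-s)
  have hd0 : (X - C (0:ℝ)) ∣ q := dvd_iff_isRoot.mpr hq0
  have hd1 : (X - C (1:ℝ)) ∣ q := dvd_iff_isRoot.mpr hq1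
  have hcop : IsCoprime (X - C (0:ℝ)) (X - C 1) := ⟨1, -1, by ring_nf; simp⟩
  obtain ⟨r, hr⟩ := hcop.mul_dvd hd0 hd1
  set h : ℝ → ℝ := fun s => -(r.eval s) with hhdef
  have hfac : ∀ s : ℝ, q.eval s = h s * (s * (1 - s)) := by
    intro s
    have := congrArg (Polynomial.eval s) hr
    simp only [eval_mul, eval_sub, eval_X, eval_C] at this
    rw [this, hhdef]; ring
  have hhcont : Continuous h := r.continuous.neg
  -- uniform bound on h
  obtain ⟨M0, hM0⟩ := (isCompact_Icc (a := (0:ℝ)) (b := 1)).exists_bound_of_continuousOn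
    hhcont.continuousOn
  set M : ℝ := max M0 0 with hMdef
  have hMnn : 0 ≤ M := le_max_right _ _
  have hM : ∀ s ∈ Set.Icc (0:ℝ) 1, ‖h s‖ ≤ M := fun s hs => (hM0 s hs).trans (le_max_left _ _)
  -- choose N
  have happrox := hu_approx x hx
  rw [Metric.tendsto_atTop] at happrox
  obtain ⟨N, hN⟩ := happrox (ε / (2 * (M + 1))) (by positivity)
  refine ⟨N, fun t ht => ?_⟩
  have hNt := hN t ht
  rw [Real.dist_eq, sub_zero, abs_of_nonneg (by positivity : (0:ℝ) ≤ ‖u t * x - x‖)] at hNt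
  set a : B := u t with hadef
  have ha : IsSelfAdjoint a := hsa t
  have hσ : spectrum ℝ a ⊆ Set.Icc 0 1 := hspec t
  have hfc : ContinuousOn f (spectrum ℝ a) := hf.mono hσ
  have hqc : ContinuousOn (fun s => q.eval s) (spectrum ℝ a) := q.continuous.continuousOn
  -- cfc identities
  have hsub : cfc (fun s => f s - q.eval s) a = cfc f a - cfc (fun s => q.eval s) a :=
    cfc_sub f (fun s => q.eval s) a hfc hqc
  have hone : cfc (fun _ : ℝ => (1:ℝ)) a = 1 := cfc_one ℝ a
  have honesub : cfc (fun s : ℝ => 1 - s) a = 1 - a := by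
    rw [cfc_sub (fun _ : ℝ => (1:ℝ)) (fun s => s) a, hone, cfc_id' ℝ a]
  have hg : cfc (fun s : ℝ => s * (1 - s)) a = a * (1 - a) := by
    rw [cfc_mul (fun s : ℝ => s) (fun s : ℝ => 1 - s) a, cfc_id' ℝ a, honesub]
  have hB : cfc (fun s => q.eval s) a = cfc h a * (a * (1 - a)) := by
    rw [cfc_congr (f := fun s => q.eval s) (g := fun s => h s * (s * (1 - s)))
      (fun s _ => hfac s), cfc_mul h (fun s : ℝ => s * (1 - s)) a, hg]
  -- norm bounds
  have hA : ‖cfc f a - cfc (fun s => q.eval s) a‖ ≤ 2 * δ := by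
    rw [← hsub]
    refine norm_cfc_le (by positivity) fun s hs => ?_
    rw [Real.norm_eq_abs, abs_sub_comm]
    exact hqf s (hσ hs)
  have hHa : ‖cfc h a‖ ≤ M :=
    norm_cfc_le hMnn fun s hs => hM s (hσ hs)
  have hanorm : ‖a‖ ≤ 1 :=
    (CStarAlgebra.norm_le_one_iff_of_nonneg a (hu_nonneg t)).mpr (hu_le_one t)
  have hax : (1 - a) * x = -(u t * x - x) := by
    rw [sub_mul, one_mul, hadef]; abel
  have key : cfc f a * x = (cfc f a - cfc (fun s => q.eval s) a) * x
      + cfc h a * (a * ((1 - a) * x)) :=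
    calc cfc f a * x = (cfc f a - cfc (fun s => q.eval s) a) * x
          + cfc (fun s => q.eval s) a * x := by rw [sub_mul]; abel
      _ = _ := by rw [hB, mul_assoc, mul_assoc]
  rw [Real.dist_eq, sub_zero, abs_of_nonneg (norm_nonneg _)]
  calc ‖cfc f a * x‖
      ≤ ‖(cfc f a - cfc (fun s => q.eval s) a) * x‖ + ‖cfc h a * (a * ((1 - a) * x))‖ := by
        rw [key]; exact norm_add_le _ _
    _ ≤ ‖cfc f a - cfc (fun s => q.eval s) a‖ * ‖x‖ + ‖cfc h a‖ * (‖a‖ * ‖(1 - a) * x‖) :=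
        add_le_add (norm_mul_le _ _)
          ((norm_mul_le _ _).trans (by gcongr; exact norm_mul_le _ _))
    _ ≤ 2 * δ * ‖x‖ + M * (1 * ‖u t * x - x‖) := by
        rw [hax, norm_neg]
        gcongr
    _ < ε := by
        have hc : 0 < ε / (2 * (M + 1)) := by positivity
        have heq : ε / (2 * (M + 1)) * (M + 1) = ε / 2 := by field_simp
        have hδle : δ * (‖x‖ + 1) = ε / 4 := by rw [hδdef]; field_simp
        have hb : M * (1 * ‖u t * x - x‖) ≤ M * (ε / (2 * (M + 1))) := by
          rw [one_mul]; exact mul_le_mul_of_nonneg_left hNt.le hMnn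
        nlinarith [norm_nonneg x, hδ, hMnn]
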